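/- Let B = k[x_1,…,x_n,y_1,…,y_m,z] with the action of the group G_2 = {z ↦ az+b, a ≠ 0} given by ψ_{(a,b)}: x_i ↦ x_i, y_j ↦ a y_j, z ↦ z + b y_1. Then B^{G_2} = k[x_1,…,x_n], and with A = A_{n,m} one has A^{G_2} = k. In particular B^{G_2} has transcendence degree n over A^{G_2} = k. -/

import Mathlib

open MvPolynomial

/-- The variables of `B_{n,m} = k[x_1,…,x_n,y_1,…,y_m,z]`. -/
abbrev BonnetVars (n m : ℕ) := Fin n ⊕ Fin m ⊕ Unit

variable (k : Type*) [Field k] (n m : ℕ)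

/-- The variable `x_i`. -/
noncomputable def Xv (i : Fin n) : MvPolynomial (BonnetVars n m) k := X (Sum.inl i)
/-- The variable `y_j`. -/
noncomputable def Yv (j : Fin m) : MvPolynomial (BonnetVars n m) k := X (Sum.inr (Sum.inl j))
/-- The variable `z`. -/
noncomputable def Zv : MvPolynomial (BonnetVars n m) k := X (Sum.inr (Sum.inr ()))

/-- The generators of the subalgebra `A_{n,m}`: the `y_j`, `z`, the polynomials
`x_i^2 + x_i z` and `x_i^3 + x_i^2 z`, and the monomials `x_1^{i_1}⋯x_n^{i_n} y_j`
with all `i_k ≤ 1`. -/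
noncomputable def AnmGens : Set (MvPolynomial (BonnetVars n m) k) :=
  Set.range (Yv k n m) ∪ {Zv k n m}
    ∪ Set.range (fun i => Xv k n m i ^ 2 + Xv k n m i * Zv k n m)
    ∪ Set.range (fun i => Xv k n m i ^ 3 + Xv k n m i ^ 2 * Zv k n m)
    ∪ {p | ∃ (s : Finset (Fin n)) (j : Fin m), p = (∏ i ∈ s, Xv k n m i) * Yv k n m j}

/-- The subalgebra `A_{n,m}` of `B_{n,m}`. -/
noncomputable def Anm : Subalgebra k (MvPolynomial (BonnetVars n m) k) :=
  Algebra.adjoin k (AnmGens k n m)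

/-- The action of `G₂ = {z ↦ az + b, a ≠ 0}` on `B_{n,m}`: `x_i ↦ x_i`,
`y_j ↦ a y_j`, `z ↦ z + b y_1` (assuming `m ≥ 1`). -/
noncomputable def psiG2 (hm : 0 < m) (a b : k) :
    MvPolynomial (BonnetVars n m) k →ₐ[k] MvPolynomial (BonnetVars n m) k :=
  MvPolynomial.aeval (fun w => match w with
    | Sum.inl i => Xv k n m i
    | Sum.inr (Sum.inl j) => MvPolynomial.C a * Yv k n m j
    | Sum.inr (Sum.inr _) => Zv k n m + MvPolynomial.C b * Yv k n m ⟨0, hm⟩)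

set_option maxRecDepth 8000

/-- helper: evaluating an `aeval` into `Polynomial k` at a point. -/
lemma polyEval_aeval {σ : Type*} (f : σ → Polynomial k) (q : MvPolynomial σ k) (s : k) :
    Polynomial.eval s (aeval f q) = eval (fun w => (f w).eval s) q := by
  induction q using MvPolynomial.induction_on with
  | C a => simp
  | add p q hp hq => simp [hp, hq]
  | mul_X p w hp => simp [hp]

/-- helper: evaluating an `aeval` into the same ring at a point. -/
lemma eval_aeval' {σ τ : Type*} (f : σ → MvPolynomial τ k) (q : MvPolynomial σ k) (ξ : τ → k) :
    eval ξ (aeval f q) = eval (fun w => eval ξ (f w)) q := by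
  induction q using MvPolynomial.induction_on with
  | C a => simp
  | add p q hp hq => simp only [map_add, hp, hq]
  | mul_X p w hp => simp only [map_mul, aeval_X, eval_mul, eval_X, hp]

/-- helper: eval of a supported polynomial only depends on the supported coordinates. -/
lemma eval_congr_supported {σ : Type*} {s : Set σ} {q : MvPolynomial σ k}
    (hq : q ∈ supported k s) (ξ ζ : σ → k) (h : ∀ w ∈ s, ξ w = ζ w) :
    eval ξ q = eval ζ q := by
  rw [supported_eq_adjoin_X] at hq
  induction hq using Algebra.adjoin_induction with
  | mem x hx => obtain ⟨w, hw, rfl⟩ := hx; simpa using h w hw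
  | algebraMap r => simp
  | add x y _ _ hx hy => simp [hx, hy]
  | mul x y _ _ hx hy => simp [hx, hy]



/-- The substitution used to analyse `Anm ∩ k[x]`: the active variable `x_i ↦ v`,
the other `x_l ↦ c l`, all `y_j ↦ 0` and `z ↦ -X`. -/
noncomputable def tmap (v : Polynomial k) (i : Fin n) (c : Fin n → k) :
    BonnetVars n m → Polynomial k := fun w =>
  match w with
  | Sum.inl l => if l = i then v else Polynomial.C (c l)
  | Sum.inr (Sum.inl _) => 0
  | Sum.inr (Sum.inr _) => -Polynomial.X

lemma agree (i : Fin n) (c : Fin n → k) {q : MvPolynomial (BonnetVars n m) k}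
    (hq : q ∈ Anm k n m) :
    aeval (tmap k n m Polynomial.X i c) q = aeval (tmap k n m 0 i c) q := by
  have hq' : q ∈ Algebra.adjoin k (AnmGens k n m) := hq
  clear hq
  induction hq' using Algebra.adjoin_induction with
  | mem g hg =>
    rcases hg with ((((⟨j, rfl⟩ | hZ) | ⟨l, rfl⟩) | ⟨l, rfl⟩) | ⟨s, j, rfl⟩)
    · simp [Yv, tmap]
    · rcases hZ with rfl
      simp [Zv, tmap]
    · simp only [map_add, map_pow, map_mul, Xv, Zv, aeval_X, tmap]
      by_cases hl : l = i <;> simp [hl] <;> ring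
    · simp only [map_add, map_pow, map_mul, Xv, Zv, aeval_X, tmap]
      by_cases hl : l = i <;> simp [hl] <;> ring
    · simp [Yv, tmap]
  | algebraMap r => simp
  | add x y _ _ hx hy => simp [hx, hy]
  | mul x y _ _ hx hy => simp [hx, hy]

lemma eval_eq_zero_point {q : MvPolynomial (BonnetVars n m) k}
    (hA : q ∈ Anm k n m)
    (hs : q ∈ supported k (Set.range (Sum.inl : Fin n → BonnetVars n m))) :
    ∀ ξ : BonnetVars n m → k, eval ξ q = eval (fun _ => (0:k)) q := by
  have key : ∀ S : Finset (Fin n), ∀ ξ : BonnetVars n m → k,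
      (∀ l, l ∉ S → ξ (Sum.inl l) = 0) → eval ξ q = eval (fun _ => (0:k)) q := by
    intro S
    induction S using Finset.induction_on with
    | empty =>
      intro ξ hξ
      exact eval_congr_supported k hs ξ (fun _ => 0)
        (by rintro w ⟨l, rfl⟩; exact hξ l (Finset.notMem_empty l))
    | @insert i S hiS IH =>
      intro ξ hξ
      have h1 := agree k n m i (fun l => ξ (Sum.inl l)) hA
      have h2 := congrArg (Polynomial.eval (ξ (Sum.inl i))) h1
      rw [polyEval_aeval, polyEval_aeval] at h2
      have e1 : eval (fun w => ((tmap k n m Polynomial.X i (fun l => ξ (Sum.inl l))) w).eval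
          (ξ (Sum.inl i))) q = eval ξ q := by
        apply eval_congr_supported k hs
        rintro w ⟨l, rfl⟩
        by_cases hl : l = i
        · subst hl; simp [tmap]
        · simp [tmap, hl]
      have e2 : eval (fun w => ((tmap k n m 0 i (fun l => ξ (Sum.inl l))) w).eval
          (ξ (Sum.inl i))) q = eval (Function.update ξ (Sum.inl i) 0) q := by
        apply eval_congr_supported k hs
        rintro w ⟨l, rfl⟩
        by_cases hl : l = i
        · subst hl; simp [tmap]
        · simp [tmap, hl, Function.update_of_ne (fun h => hl (Sum.inl.inj h))]
      rw [e1, e2] at h2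
      rw [h2]
      apply IH
      intro l hl
      by_cases hl2 : l = i
      · subst hl2; simp
      · rw [Function.update_of_ne (fun h => hl2 (Sum.inl.inj h))]
        exact hξ l (by simp [hl2, Finset.mem_insert]; intro h; exact absurd h hl)
  intro ξ
  exact key Finset.univ ξ (fun l hl => absurd (Finset.mem_univ l) hl)

lemma anm_sup_const [CharZero k] {q : MvPolynomial (BonnetVars n m) k}
    (hA : q ∈ Anm k n m)
    (hs : q ∈ supported k (Set.range (Sum.inl : Fin n → BonnetVars n m))) :
    ∃ c : k, q = MvPolynomial.C c := by
  refine ⟨eval (fun _ => 0) q, MvPolynomial.funext fun ξ => ?_⟩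
  rw [eval_C]
  exact eval_eq_zero_point k n m hA hs ξ

def updY (ξ : BonnetVars n m → k) : BonnetVars n m → k
  | Sum.inl l => ξ (Sum.inl l)
  | Sum.inr (Sum.inl _) => 0
  | Sum.inr (Sum.inr u) => ξ (Sum.inr (Sum.inr u))

def updZ (ξ : BonnetVars n m → k) (s : k) : BonnetVars n m → k
  | Sum.inl l => ξ (Sum.inl l)
  | Sum.inr (Sum.inl j) => ξ (Sum.inr (Sum.inl j))
  | Sum.inr (Sum.inr _) => s

def xonly (ξ : BonnetVars n m → k) : BonnetVars n m → k
  | Sum.inl l => ξ (Sum.inl l)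
  | Sum.inr _ => 0

noncomputable def xproj : BonnetVars n m → MvPolynomial (BonnetVars n m) k := fun w =>
  match w with
  | Sum.inl l => X (Sum.inl l)
  | Sum.inr _ => 0

noncomputable def uY (ξ : BonnetVars n m → k) : BonnetVars n m → Polynomial k
  | Sum.inl l => Polynomial.C (ξ (Sum.inl l))
  | Sum.inr (Sum.inl j) => Polynomial.C (ξ (Sum.inr (Sum.inl j))) * Polynomial.X
  | Sum.inr (Sum.inr _) => Polynomial.C (ξ (Sum.inr (Sum.inr ())))

noncomputable def uZ (ξ : BonnetVars n m → k) : BonnetVars n m → Polynomial k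
  | Sum.inl l => Polynomial.C (ξ (Sum.inl l))
  | Sum.inr (Sum.inl j) => Polynomial.C (ξ (Sum.inr (Sum.inl j)))
  | Sum.inr (Sum.inr _) => Polynomial.C (ξ (Sum.inr (Sum.inr ()))) + Polynomial.X

lemma psi_fix_supported (hm : 0 < m) (a b : k) {q : MvPolynomial (BonnetVars n m) k}
    (hq : q ∈ supported k (Set.range (Sum.inl : Fin n → BonnetVars n m))) :
    psiG2 k n m hm a b q = q := by
  rw [supported_eq_adjoin_X] at hq
  induction hq using Algebra.adjoin_induction with
  | mem g hg =>
    obtain ⟨w, ⟨l, rfl⟩, rfl⟩ := hg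
    simp [psiG2, Xv]
  | algebraMap r => simp [psiG2]
  | add x y _ _ hx hy => simp [hx, hy]
  | mul x y _ _ hx hy => simp [hx, hy]

lemma inv_to_supported (hm : 0 < m) [CharZero k] {q : MvPolynomial (BonnetVars n m) k}
    (h : ∀ a b : k, a ≠ 0 → psiG2 k n m hm a b q = q) :
    q ∈ supported k (Set.range (Sum.inl : Fin n → BonnetVars n m)) := by
  classical
  -- Step Y : zeroing out all `y` coordinates does not change evaluations
  have stepY : ∀ ξ : BonnetVars n m → k, eval (updY k n m ξ) q = eval ξ q := by
    intro ξ
    have hroot : ∀ a : k, a ≠ 0 → Polynomial.eval a (aeval (uY k n m ξ) q) = eval ξ q := by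
      intro a ha
      have h1 := congrArg (eval ξ) (h a 0 ha)
      simp only [psiG2] at h1
      rw [eval_aeval'] at h1
      rw [polyEval_aeval, ← h1]
      refine congrArg (fun ξ' => eval ξ' q) (funext fun w => ?_)
      rcases w with l | j | u'
      · show Polynomial.eval a (uY k n m ξ (Sum.inl l)) = eval ξ (Xv k n m l)
        rw [show uY k n m ξ (Sum.inl l) = Polynomial.C (ξ (Sum.inl l)) from rfl]
        simp only [Xv, Polynomial.eval_C, eval_X]
      · show Polynomial.eval a (uY k n m ξ (Sum.inr (Sum.inl j))) = eval ξ (C a * Yv k n m j)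
        rw [show uY k n m ξ (Sum.inr (Sum.inl j)) =
          Polynomial.C (ξ (Sum.inr (Sum.inl j))) * Polynomial.X from rfl]
        simp only [Yv, Polynomial.eval_mul, Polynomial.eval_C, Polynomial.eval_X,
          map_mul, eval_C, eval_X]
        ring
      · cases u'
        show Polynomial.eval a (uY k n m ξ (Sum.inr (Sum.inr ()))) =
          eval ξ (Zv k n m + C (0:k) * Yv k n m ⟨0, hm⟩)
        rw [show uY k n m ξ (Sum.inr (Sum.inr ())) =
          Polynomial.C (ξ (Sum.inr (Sum.inr ()))) from rfl]
        simp only [Zv, Yv, Polynomial.eval_C, map_add, map_mul, eval_C, eval_X, C_0,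
          zero_mul, add_zero]
    have hPC : aeval (uY k n m ξ) q = Polynomial.C (eval ξ q) := by
      have hz : aeval (uY k n m ξ) q - Polynomial.C (eval ξ q) = 0 := by
        apply Polynomial.eq_zero_of_infinite_isRoot
        have hsub : ({(0:k)}ᶜ : Set k) ⊆
            {x | (aeval (uY k n m ξ) q - Polynomial.C (eval ξ q)).IsRoot x} := by
          intro a ha
          have ha' : a ≠ 0 := by simpa using ha
          simp [Polynomial.IsRoot, hroot a ha']
        exact ((Set.finite_singleton (0:k)).infinite_compl).mono hsub
      rwa [sub_eq_zero] at hz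
    have h0 : Polynomial.eval 0 (aeval (uY k n m ξ) q) = eval ξ q := by rw [hPC]; simp
    rw [polyEval_aeval] at h0
    have hpt : (fun w => ((uY k n m ξ) w).eval 0) = updY k n m ξ := by
      funext w
      rcases w with l | j | u'
      · rw [show uY k n m ξ (Sum.inl l) = Polynomial.C (ξ (Sum.inl l)) from rfl,
          show updY k n m ξ (Sum.inl l) = ξ (Sum.inl l) from rfl, Polynomial.eval_C]
      · rw [show uY k n m ξ (Sum.inr (Sum.inl j)) =
            Polynomial.C (ξ (Sum.inr (Sum.inl j))) * Polynomial.X from rfl,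
          show updY k n m ξ (Sum.inr (Sum.inl j)) = 0 from rfl]
        simp
      · cases u'
        rw [show uY k n m ξ (Sum.inr (Sum.inr ())) =
            Polynomial.C (ξ (Sum.inr (Sum.inr ()))) from rfl,
          show updY k n m ξ (Sum.inr (Sum.inr ())) = ξ (Sum.inr (Sum.inr ())) from rfl,
          Polynomial.eval_C]
    rwa [hpt] at h0
  -- Step Z : if the `y₁` coordinate is 1, the `z` coordinate is irrelevant
  have stepZ : ∀ ξ : BonnetVars n m → k, ξ (Sum.inr (Sum.inl ⟨0, hm⟩)) = 1 →
      ∀ s : k, eval (updZ k n m ξ s) q = eval ξ q := by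
    intro ξ hξ1 s
    have hroot : ∀ b : k, b ≠ 0 → Polynomial.eval b (aeval (uZ k n m ξ) q) = eval ξ q := by
      intro b hb
      have h1 := congrArg (eval ξ) (h 1 b one_ne_zero)
      simp only [psiG2] at h1
      rw [eval_aeval'] at h1
      rw [polyEval_aeval, ← h1]
      refine congrArg (fun ξ' => eval ξ' q) (funext fun w => ?_)
      rcases w with l | j | u'
      · show Polynomial.eval b (uZ k n m ξ (Sum.inl l)) = eval ξ (Xv k n m l)
        rw [show uZ k n m ξ (Sum.inl l) = Polynomial.C (ξ (Sum.inl l)) from rfl]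
        simp only [Xv, Polynomial.eval_C, eval_X]
      · show Polynomial.eval b (uZ k n m ξ (Sum.inr (Sum.inl j))) = eval ξ (C (1:k) * Yv k n m j)
        rw [show uZ k n m ξ (Sum.inr (Sum.inl j)) =
          Polynomial.C (ξ (Sum.inr (Sum.inl j))) from rfl]
        simp only [Yv, Polynomial.eval_C, map_mul, eval_C, eval_X, map_one, one_mul]
      · cases u'
        show Polynomial.eval b (uZ k n m ξ (Sum.inr (Sum.inr ()))) =
          eval ξ (Zv k n m + C b * Yv k n m ⟨0, hm⟩)
        rw [show uZ k n m ξ (Sum.inr (Sum.inr ())) =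
          Polynomial.C (ξ (Sum.inr (Sum.inr ()))) + Polynomial.X from rfl]
        simp only [Zv, Yv, Polynomial.eval_add, Polynomial.eval_C, Polynomial.eval_X,
          map_add, map_mul, eval_C, eval_X, hξ1, mul_one]
    have hPC : aeval (uZ k n m ξ) q = Polynomial.C (eval ξ q) := by
      have hz : aeval (uZ k n m ξ) q - Polynomial.C (eval ξ q) = 0 := by
        apply Polynomial.eq_zero_of_infinite_isRoot
        have hsub : ({(0:k)}ᶜ : Set k) ⊆
            {x | (aeval (uZ k n m ξ) q - Polynomial.C (eval ξ q)).IsRoot x} := by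
          intro b hb
          have hb' : b ≠ 0 := by simpa using hb
          simp [Polynomial.IsRoot, hroot b hb']
        exact ((Set.finite_singleton (0:k)).infinite_compl).mono hsub
      rwa [sub_eq_zero] at hz
    have h0 : Polynomial.eval (s - ξ (Sum.inr (Sum.inr ()))) (aeval (uZ k n m ξ) q)
        = eval ξ q := by rw [hPC]; simp
    rw [polyEval_aeval] at h0
    have hpt : (fun w => ((uZ k n m ξ) w).eval (s - ξ (Sum.inr (Sum.inr ()))))
        = updZ k n m ξ s := by
      funext w
      rcases w with l | j | u'
      · rw [show uZ k n m ξ (Sum.inl l) = Polynomial.C (ξ (Sum.inl l)) from rfl,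
          show updZ k n m ξ s (Sum.inl l) = ξ (Sum.inl l) from rfl, Polynomial.eval_C]
      · rw [show uZ k n m ξ (Sum.inr (Sum.inl j)) =
            Polynomial.C (ξ (Sum.inr (Sum.inl j))) from rfl,
          show updZ k n m ξ s (Sum.inr (Sum.inl j)) = ξ (Sum.inr (Sum.inl j)) from rfl,
          Polynomial.eval_C]
      · cases u'
        rw [show uZ k n m ξ (Sum.inr (Sum.inr ())) =
            Polynomial.C (ξ (Sum.inr (Sum.inr ()))) + Polynomial.X from rfl,
          show updZ k n m ξ s (Sum.inr (Sum.inr ())) = s from rfl]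
        simp
    rwa [hpt] at h0
  -- combine
  have hall : ∀ ξ : BonnetVars n m → k, eval ξ q = eval (xonly k n m ξ) q := by
    intro ξ
    set η : BonnetVars n m → k := fun w =>
      match w with
      | Sum.inl l => ξ (Sum.inl l)
      | Sum.inr (Sum.inl j) => if j = ⟨0, hm⟩ then 1 else 0
      | Sum.inr (Sum.inr u') => ξ (Sum.inr (Sum.inr u')) with hη
    have hη1 : η (Sum.inr (Sum.inl ⟨0, hm⟩)) = 1 := by simp [hη]
    have hupdη : updY k n m η = updY k n m ξ := by
      funext w
      rcases w with l | j | u'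
      · rfl
      · rfl
      · cases u'; rfl
    have hxonly : updY k n m (updZ k n m η 0) = xonly k n m ξ := by
      funext w
      rcases w with l | j | u'
      · rfl
      · rfl
      · cases u'; rfl
    calc eval ξ q = eval (updY k n m ξ) q := (stepY ξ).symm
      _ = eval (updY k n m η) q := by rw [hupdη]
      _ = eval η q := stepY η
      _ = eval (updZ k n m η 0) q := (stepZ η hη1 0).symm
      _ = eval (updY k n m (updZ k n m η 0)) q := (stepY _).symm
      _ = eval (xonly k n m ξ) q := by rw [hxonly]
  have hqr : q = aeval (xproj k n m) q := by
    apply MvPolynomial.funext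
    intro ξ
    rw [eval_aeval']
    have hpt : (fun w => eval ξ (xproj k n m w)) = xonly k n m ξ := by
      funext w
      rcases w with l | j | u'
      · rw [show xproj k n m (Sum.inl l) = (X (Sum.inl l) : MvPolynomial (BonnetVars n m) k)
          from rfl, show xonly k n m ξ (Sum.inl l) = ξ (Sum.inl l) from rfl, eval_X]
      · rw [show xproj k n m (Sum.inr (Sum.inl j)) = (0 : MvPolynomial (BonnetVars n m) k)
          from rfl, show xonly k n m ξ (Sum.inr (Sum.inl j)) = 0 from rfl, map_zero]
      · cases u'
        rw [show xproj k n m (Sum.inr (Sum.inr ())) = (0 : MvPolynomial (BonnetVars n m) k)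
          from rfl, show xonly k n m ξ (Sum.inr (Sum.inr ())) = 0 from rfl, map_zero]
    rw [hpt, ← hall]
  have hmem : aeval (xproj k n m) q ∈
      supported k (Set.range (Sum.inl : Fin n → BonnetVars n m)) := by
    have hle : Algebra.adjoin k (Set.range (xproj k n m)) ≤
        supported k (Set.range (Sum.inl : Fin n → BonnetVars n m)) := by
      rw [Algebra.adjoin_le_iff]
      rintro g ⟨w, rfl⟩
      rcases w with l | j | u'
      · exact SetLike.mem_coe.2 (X_mem_supported.2 ⟨l, rfl⟩)
      · exact SetLike.mem_coe.2 ((supported k _).zero_mem)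
      · exact SetLike.mem_coe.2 ((supported k _).zero_mem)
    have hr : aeval (xproj k n m) q ∈ Algebra.adjoin k (Set.range (xproj k n m)) := by
      rw [Algebra.adjoin_range_eq_range_aeval]
      exact ⟨q, rfl⟩
    exact hle hr
  rw [hqr]
  exact hmem
lemma basis_part (hn : 0 < n) :
    ∃ b : Fin n →
        ↥(MvPolynomial.supported k (Set.range (Sum.inl : Fin n → BonnetVars n m))),
      IsTranscendenceBasis k b := by
  classical
  set S := MvPolynomial.supported k (Set.range (Sum.inl : Fin n → BonnetVars n m)) with hS
  have hXmem : ∀ i : Fin n, (X (Sum.inl i) : MvPolynomial (BonnetVars n m) k) ∈ S :=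
    fun i => X_mem_supported.2 ⟨i, rfl⟩
  set b : Fin n → ↥S := fun i => ⟨X (Sum.inl i), hXmem i⟩ with hb
  -- algebraic independence of the X (inl i) in the big ring
  have hindB : AlgebraicIndependent k
      (fun i : Fin n => (X (Sum.inl i) : MvPolynomial (BonnetVars n m) k)) := by
    rw [algebraicIndependent_iff_injective_aeval]
    have he : (aeval fun i : Fin n => (X (Sum.inl i) : MvPolynomial (BonnetVars n m) k))
        = (rename (Sum.inl : Fin n → BonnetVars n m)).comp
            (AlgHom.id k (MvPolynomial (Fin n) k)) := by
      apply MvPolynomial.algHom_ext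
      intro i
      simp
    rw [he]
    simpa using rename_injective (R := k) (Sum.inl : Fin n → BonnetVars n m) Sum.inl_injective
  have hind : AlgebraicIndependent k b := by
    apply AlgebraicIndependent.of_comp S.val
    exact hindB
  -- adjoin of the range of b is everything
  have htop : Algebra.adjoin k (Set.range b) = (⊤ : Subalgebra k ↥S) := by
    apply Subalgebra.map_injective (f := S.val) Subtype.val_injective
    rw [AlgHom.map_adjoin, Algebra.map_top, Subalgebra.range_val]
    have himg : S.val '' Set.range b
        = X '' (Set.range (Sum.inl : Fin n → BonnetVars n m)) := by
      ext g
      constructor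
      · rintro ⟨-, ⟨i, rfl⟩, rfl⟩
        exact ⟨Sum.inl i, ⟨i, rfl⟩, rfl⟩
      · rintro ⟨-, ⟨i, rfl⟩, rfl⟩
        exact ⟨b i, ⟨i, rfl⟩, rfl⟩
    rw [himg, hS, supported_eq_adjoin_X]
  refine ⟨b, hind, ?_⟩
  intro s hs hbs
  refine subset_antisymm hbs ?_
  intro u hu
  by_contra hun
  have hbinj : Function.Injective b := hind.injective
  -- the option family is algebraically independent
  have hopt : AlgebraicIndependent k (fun o : Option (Fin n) => o.elim u b) := by
    set j : Option (Fin n) → s := fun o => o.elim ⟨u, hu⟩ (fun i => ⟨b i, hbs ⟨i, rfl⟩⟩) with hj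
    have hjinj : Function.Injective j := by
      intro o1 o2 he
      rcases o1 with _ | i1 <;> rcases o2 with _ | i2
      · rfl
      · exfalso; apply hun
        have : u = b i2 := congrArg Subtype.val he
        exact ⟨i2, this.symm⟩
      · exfalso; apply hun
        have : b i1 = u := congrArg Subtype.val he
        exact ⟨i1, this⟩
      · have : b i1 = b i2 := congrArg Subtype.val he
        rw [hbinj this]
    have hco : (fun x : s => (x : ↥S)) ∘ j = fun o : Option (Fin n) => o.elim u b := by
      funext o
      rcases o with _ | i <;> rfl
    have := hs.comp j hjinj
    rw [← hco]; exact this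
  have htr : Transcendental (Algebra.adjoin k (Set.range b)) u :=
    (hind.option_iff_transcendental u).1 hopt
  apply htr
  have humem : u ∈ Algebra.adjoin k (Set.range b) := htop ▸ Algebra.mem_top
  have : u = algebraMap (Algebra.adjoin k (Set.range b)) ↥S ⟨u, humem⟩ := rfl
  rw [this]
  exact isAlgebraic_algebraMap _

/-- `B_{n,m}^{G₂} = k[x_1,…,x_n]` and `A_{n,m}^{G₂} = k`; in particular
`B_{n,m}^{G₂}` has transcendence degree `n` over `A_{n,m}^{G₂} = k`. -/
theorem G2_invariants (hn : 0 < n) (hm : 0 < m) [CharZero k] :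
    (∀ p : MvPolynomial (BonnetVars n m) k,
      (∀ a b : k, a ≠ 0 → psiG2 k n m hm a b p = p) ↔
        p ∈ MvPolynomial.supported k (Set.range (Sum.inl : Fin n → BonnetVars n m))) ∧
    (∀ p : MvPolynomial (BonnetVars n m) k,
      (p ∈ Anm k n m ∧ ∀ a b : k, a ≠ 0 → psiG2 k n m hm a b p = p) ↔
        ∃ c : k, p = MvPolynomial.C c) ∧
    ∃ b : Fin n →
        ↥(MvPolynomial.supported k (Set.range (Sum.inl : Fin n → BonnetVars n m))),
      IsTranscendenceBasis k b := by
  refine ⟨?_, ?_, ?_⟩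
  · intro p
    exact ⟨fun h => inv_to_supported k n m hm h,
      fun hp a b _ => psi_fix_supported k n m hm a b hp⟩
  · intro p
    constructor
    · rintro ⟨hA, hinv⟩
      exact anm_sup_const k n m hA (inv_to_supported k n m hm hinv)
    · rintro ⟨c, rfl⟩
      refine ⟨?_, ?_⟩
      · rw [← MvPolynomial.algebraMap_eq]
        exact Subalgebra.algebraMap_mem _ c
      · intro a b _
        simp only [psiG2, aeval_C, MvPolynomial.algebraMap_eq]
  · exact basis_part k n m hn
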